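/- For every continuous function f : Ω → ℝ, if ‖[D, π(M_f)]‖ ≤ 1 then both ‖Kf − f‖_{L²(μ)} ≤ 1 and ‖Lf − f‖_{L²(μ)} ≤ 1. -/

import Mathlib

open MeasureTheory ContinuousLinearMap
open scoped RealInnerProductSpace InnerProductSpace ENNReal

noncomputable section

/-- The shift space `Ω = {0,1}^ℕ`, with `false` playing the role of the symbol `0`
and `true` of the symbol `1`. -/
abbrev Ω : Type := ℕ → Bool

/-- The shift map `σ`, `σ(x)ₙ = x_{n+1}`. -/
def shiftMap : Ω → Ω := fun x n => x (n + 1)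

/-- Prepending a symbol: `consSeq a x = ax`. -/
def consSeq (a : Bool) (x : Ω) : Ω := fun n => Nat.casesOn n a (fun k => x k)

/-- The cylinder set `[w]` of sequences beginning with the finite word `w`. -/
def cylinder (w : List Bool) : Set Ω := {x | ∀ i : Fin w.length, x (i : ℕ) = w.get i}

/-- The Hilbert space `L²(μ)` (real). -/
abbrev E (μ : Measure Ω) := Lp (α := Ω) ℝ 2 μ

/-- The Hilbert space `H = L²(μ) × L²(μ)` with the norm `√(‖φ‖² + ‖ψ‖²)`. -/
abbrev HS (μ : Measure Ω) := WithLp 2 (E μ × E μ)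

variable {μ : Measure Ω}

/-- The diagonal block operator `(φ, ψ) ↦ (A₁φ, A₂ψ)` on `H`. -/
def blockDiag (A₁ A₂ : E μ →L[ℝ] E μ) : HS μ →L[ℝ] HS μ :=
  ((WithLp.prodContinuousLinearEquiv 2 ℝ (E μ) (E μ)).symm.toContinuousLinearMap).comp
    (((A₁.comp (ContinuousLinearMap.fst ℝ (E μ) (E μ))).prod
        (A₂.comp (ContinuousLinearMap.snd ℝ (E μ) (E μ)))).comp
      (WithLp.prodContinuousLinearEquiv 2 ℝ (E μ) (E μ)).toContinuousLinearMap)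

/-- The antidiagonal block operator `(φ, ψ) ↦ (A₁ψ, A₂φ)` on `H`. -/
def blockAntidiag (A₁ A₂ : E μ →L[ℝ] E μ) : HS μ →L[ℝ] HS μ :=
  ((WithLp.prodContinuousLinearEquiv 2 ℝ (E μ) (E μ)).symm.toContinuousLinearMap).comp
    (((A₁.comp (ContinuousLinearMap.snd ℝ (E μ) (E μ))).prod
        (A₂.comp (ContinuousLinearMap.fst ℝ (E μ) (E μ)))).comp
      (WithLp.prodContinuousLinearEquiv 2 ℝ (E μ) (E μ)).toContinuousLinearMap)

/-- The diagonal representation `π(A)(φ,ψ) = (Aφ, Aψ)`. -/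
def diagRep (A : E μ →L[ℝ] E μ) : HS μ →L[ℝ] HS μ := blockDiag A A

/-- The Dirac operator `D(φ,ψ) = (Kψ, Lφ)` associated with the pair `(K, L)`. -/
def dirac (K L : E μ →L[ℝ] E μ) : HS μ →L[ℝ] HS μ := blockAntidiag K L

/-- The commutator `[D, π(A)]`. -/
def commD (K L A : E μ →L[ℝ] E μ) : HS μ →L[ℝ] HS μ :=
  (dirac K L).comp (diagRep A) - (diagRep A).comp (dirac K L)

/-- The rank-one orthogonal projection onto the span of the unit vector `ψ`:
`φ ↦ ⟪ψ, φ⟫ • ψ`. -/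
def rankOneProj (ψ : E μ) : E μ →L[ℝ] E μ := (innerSL ℝ ψ).smulRight ψ

/-- The Haar-basis element `e_w = 2^{ℓ(w)/2} (χ_{[w1]} - χ_{[w0]})`, as a function on `Ω`. -/
def haarFun (w : List Bool) : Ω → ℝ := fun x =>
  (2 : ℝ) ^ ((w.length : ℝ) / 2) *
    ((cylinder (w ++ [true])).indicator 1 x - (cylinder (w ++ [false])).indicator 1 x)

lemma continuous_shiftMap : Continuous shiftMap :=
  continuous_pi fun n => continuous_apply (n + 1)

lemma continuous_consSeq (a : Bool) : Continuous (consSeq a) := by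
  apply continuous_pi
  intro n
  cases n with
  | zero => exact continuous_const
  | succ k => exact continuous_apply k

/-- The Koopman operator on continuous functions: `f ↦ f ∘ σ`. -/
def koopmanC (f : C(Ω, ℝ)) : C(Ω, ℝ) := f.comp ⟨shiftMap, continuous_shiftMap⟩

/-- The Ruelle operator on continuous functions: `(Lf)(x) = (f(0x) + f(1x))/2`. -/
def ruelleC (f : C(Ω, ℝ)) : C(Ω, ℝ) :=
  ⟨fun x => (f (consSeq false x) + f (consSeq true x)) / 2,
    ((f.continuous.comp (continuous_consSeq false)).add
      (f.continuous.comp (continuous_consSeq true))).div_const 2⟩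

end

section AuxLemmas
open MeasureTheory

lemma measurable_shiftMap : Measurable shiftMap :=
  measurable_pi_iff.mpr fun n => measurable_pi_apply (n+1)

lemma measurable_consSeq (a : Bool) : Measurable (consSeq a) := by
  refine measurable_pi_iff.mpr fun n => ?_
  cases n with
  | zero => exact measurable_const
  | succ k => exact measurable_pi_apply k

lemma shiftMap_consSeq (a : Bool) (x : Ω) : shiftMap (consSeq a x) = x := rfl

lemma consSeq_zero (a : Bool) (x : Ω) : consSeq a x 0 = a := rfl

lemma cylinder_nil : cylinder ([] : List Bool) = Set.univ := by
  ext x; simp [_root_.cylinder]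

lemma mem_cylinder_cons {x : Ω} {b : Bool} {w : List Bool} :
    x ∈ cylinder (b :: w) ↔ x 0 = b ∧ shiftMap x ∈ cylinder w := by
  constructor
  · intro hx
    refine ⟨hx ⟨0, Nat.succ_pos _⟩, fun i => hx ⟨i.1 + 1, Nat.succ_lt_succ i.2⟩⟩
  · rintro ⟨h0, hs⟩ ⟨i, hi⟩
    cases i with
    | zero => exact h0
    | succ k => exact hs ⟨k, Nat.lt_of_succ_lt_succ hi⟩

lemma mem_cylinder_singleton {x : Ω} {b : Bool} : x ∈ cylinder [b] ↔ x 0 = b := by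
  rw [mem_cylinder_cons, cylinder_nil]; simp

lemma mem_cylinder_append {x : Ω} {w : List Bool} {b : Bool} :
    x ∈ cylinder (w ++ [b]) ↔ x ∈ cylinder w ∧ x w.length = b := by
  induction w generalizing x with
  | nil => simp [mem_cylinder_singleton, cylinder_nil]
  | cons c w' ih =>
    simp only [List.cons_append, mem_cylinder_cons, ih, List.length_cons]
    constructor
    · rintro ⟨h0, h1, h2⟩; exact ⟨⟨h0, h1⟩, h2⟩
    · rintro ⟨⟨h0, h1⟩, h2⟩; exact ⟨h0, h1, h2⟩

lemma measurableSet_cylinder (w : List Bool) : MeasurableSet (cylinder w) := by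
  have : cylinder w = ⋂ i : Fin w.length, (fun x : Ω => x (i : ℕ)) ⁻¹' {w.get i} := by
    ext x; simp [_root_.cylinder]
  rw [this]
  exact MeasurableSet.iInter fun i =>
    (measurable_pi_apply (i : ℕ)) (measurableSet_singleton _)

def cylSets : Set (Set Ω) := {s | ∃ w : List Bool, s = cylinder w}

lemma isPiSystem_cylSets : IsPiSystem cylSets := by
  rintro s ⟨w, rfl⟩ t ⟨v, rfl⟩ hne
  obtain ⟨y, hyw, hyv⟩ := hne
  rcases le_total w.length v.length with hl | hl
  · have hsub : cylinder v ⊆ cylinder w := by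
      intro z hz i
      have h2 : z (i : ℕ) = v.get ⟨i.1, lt_of_lt_of_le i.2 hl⟩ := hz ⟨i.1, lt_of_lt_of_le i.2 hl⟩
      have h3 : y (i : ℕ) = v.get ⟨i.1, lt_of_lt_of_le i.2 hl⟩ := hyv ⟨i.1, lt_of_lt_of_le i.2 hl⟩
      rw [h2, ← h3]; exact hyw i
    rw [Set.inter_eq_self_of_subset_right hsub]; exact ⟨v, rfl⟩
  · have hsub : cylinder w ⊆ cylinder v := by
      intro z hz i
      have h2 : z (i : ℕ) = w.get ⟨i.1, lt_of_lt_of_le i.2 hl⟩ := hz ⟨i.1, lt_of_lt_of_le i.2 hl⟩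
      have h3 : y (i : ℕ) = w.get ⟨i.1, lt_of_lt_of_le i.2 hl⟩ := hyw ⟨i.1, lt_of_lt_of_le i.2 hl⟩
      rw [h2, ← h3]; exact hyv i
    rw [Set.inter_eq_self_of_subset_left hsub]; exact ⟨w, rfl⟩

lemma generateFrom_cylSets :
    MeasurableSpace.generateFrom cylSets = (inferInstance : MeasurableSpace Ω) := by
  apply le_antisymm
  · exact MeasurableSpace.generateFrom_le (by rintro s ⟨w, rfl⟩; exact measurableSet_cylinder w)
  · have h : ∀ n : ℕ, ∀ b : Bool,
        MeasurableSet[MeasurableSpace.generateFrom cylSets] {x : Ω | x n = b} := by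
      intro n b
      have heq : {x : Ω | x n = b}
          = ⋃ w : List Bool, ⋃ (_ : w.length = n), cylinder (w ++ [b]) := by
        ext x
        simp only [Set.mem_setOf_eq, Set.mem_iUnion]
        constructor
        · intro hx
          refine ⟨List.ofFn (fun i : Fin n => x i), by simp, ?_⟩
          rw [mem_cylinder_append]
          constructor
          · intro i
            simp [List.get_ofFn]
          · simpa using hx
        · rintro ⟨w, hw, hx⟩
          rw [mem_cylinder_append] at hx
          rw [← hw]; exact hx.2
      rw [heq]
      exact MeasurableSet.iUnion fun w => MeasurableSet.iUnion fun _ =>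
        MeasurableSpace.measurableSet_generateFrom ⟨w ++ [b], rfl⟩
    show MeasurableSpace.pi ≤ MeasurableSpace.generateFrom cylSets
    refine iSup_le fun n => Measurable.comap_le ?_
    exact @measurable_to_countable' Bool Ω _ _
      (MeasurableSpace.generateFrom cylSets) (fun x : Ω => x n) (fun b => h n b)

end AuxLemmas

section MeasureLemmas
open MeasureTheory

lemma half_pow_succ_add (n : ℕ) :
    ((1:ℝ≥0∞)/2)^(n+1) + ((1:ℝ≥0∞)/2)^(n+1) = ((1:ℝ≥0∞)/2)^n := by
  rw [pow_succ, ← mul_add, ENNReal.add_halves, mul_one]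

lemma two_mul_half_pow_succ (n : ℕ) :
    (2:ℝ≥0∞) * ((1:ℝ≥0∞)/2)^(n+1) = ((1:ℝ≥0∞)/2)^n := by
  rw [pow_succ, one_div, mul_comm, mul_assoc, ENNReal.inv_mul_cancel two_ne_zero
    ENNReal.ofNat_ne_top, mul_one]

lemma shift_preimage_cylinder (w : List Bool) :
    shiftMap ⁻¹' cylinder w = cylinder (false :: w) ∪ cylinder (true :: w) := by
  ext x
  simp only [Set.mem_preimage, Set.mem_union, mem_cylinder_cons]
  cases hx : x 0 <;> simp [hx]

lemma disjoint_cylinder_cons (w : List Bool) :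
    Disjoint (cylinder (false :: w)) (cylinder (true :: w)) := by
  rw [Set.disjoint_left]
  intro x hx hx'
  rw [mem_cylinder_cons] at hx hx'
  rw [hx.1] at hx'
  exact absurd hx'.1 (by simp)

lemma map_shiftMap_eq (μ : Measure Ω) [IsProbabilityMeasure μ]
    (hμ : ∀ w : List Bool, μ (cylinder w) = (1 / 2) ^ w.length) :
    μ.map shiftMap = μ := by
  have : IsProbabilityMeasure (μ.map shiftMap) :=
    Measure.isProbabilityMeasure_map measurable_shiftMap.aemeasurable
  refine ext_of_generate_finite cylSets generateFrom_cylSets.symm isPiSystem_cylSets ?_ (by simp)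
  rintro s ⟨w, rfl⟩
  rw [Measure.map_apply measurable_shiftMap (measurableSet_cylinder w),
    shift_preimage_cylinder,
    measure_union (disjoint_cylinder_cons w) (measurableSet_cylinder _), hμ, hμ, hμ]
  simpa using half_pow_succ_add w.length

lemma cons_preimage_cylinder_cons (a b : Bool) (w : List Bool) :
    consSeq a ⁻¹' cylinder (b :: w) = if a = b then cylinder w else ∅ := by
  ext x
  simp only [Set.mem_preimage, mem_cylinder_cons, consSeq_zero, shiftMap_consSeq]
  by_cases hab : a = b <;> simp [hab]

lemma map_consSeq_eq (a : Bool) (μ : Measure Ω) [IsProbabilityMeasure μ]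
    (hμ : ∀ w : List Bool, μ (cylinder w) = (1 / 2) ^ w.length) :
    μ.map (consSeq a) = (2 : ℝ≥0∞) • μ.restrict (cylinder [a]) := by
  have : IsProbabilityMeasure (μ.map (consSeq a)) :=
    Measure.isProbabilityMeasure_map (measurable_consSeq a).aemeasurable
  refine ext_of_generate_finite cylSets generateFrom_cylSets.symm isPiSystem_cylSets ?_ ?_
  · rintro s ⟨w, rfl⟩
    rw [Measure.map_apply (measurable_consSeq a) (measurableSet_cylinder w),
      Measure.smul_apply, Measure.restrict_apply (measurableSet_cylinder w)]
    cases w with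
    | nil =>
      rw [cylinder_nil, Set.univ_inter, Set.preimage_univ, hμ]
      simp only [measure_univ, List.length_cons, List.length_nil, pow_one]
      rw [smul_eq_mul, two_mul_half_pow_succ, pow_zero]
    | cons b w' =>
      rw [cons_preimage_cylinder_cons]
      by_cases hab : a = b
      · subst hab
        rw [if_pos rfl]
        have hsub : cylinder (a :: w') ⊆ cylinder [a] := fun x hx =>
          mem_cylinder_singleton.mpr (mem_cylinder_cons.mp hx).1
        rw [Set.inter_eq_self_of_subset_left hsub, hμ, hμ]
        simp only [List.length_cons]
        rw [smul_eq_mul, two_mul_half_pow_succ]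
      · rw [if_neg hab]
        have hemp : cylinder (b :: w') ∩ cylinder [a] = ∅ := by
          ext x
          simp only [Set.mem_inter_iff, Set.mem_empty_iff_false, iff_false, not_and]
          intro hx hx'
          rw [mem_cylinder_cons] at hx
          rw [mem_cylinder_singleton] at hx'
          exact hab (hx'.symm.trans hx.1)
        rw [hemp]
        simp
  · simp only [measure_univ]
    rw [Measure.smul_apply, Measure.restrict_apply MeasurableSet.univ, Set.univ_inter, hμ]
    simp only [List.length_cons, List.length_nil, pow_one]
    rw [smul_eq_mul, two_mul_half_pow_succ, pow_zero]

lemma qmp_shiftMap (μ : Measure Ω) [IsProbabilityMeasure μ]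
    (hμ : ∀ w : List Bool, μ (cylinder w) = (1 / 2) ^ w.length) :
    Measure.QuasiMeasurePreserving shiftMap μ μ :=
  ⟨measurable_shiftMap, by rw [map_shiftMap_eq μ hμ]⟩

lemma qmp_consSeq (a : Bool) (μ : Measure Ω) [IsProbabilityMeasure μ]
    (hμ : ∀ w : List Bool, μ (cylinder w) = (1 / 2) ^ w.length) :
    Measure.QuasiMeasurePreserving (consSeq a) μ μ := by
  refine ⟨measurable_consSeq a, ?_⟩
  rw [map_consSeq_eq a μ hμ]
  refine Measure.AbsolutelyContinuous.mk fun s hs h0 => ?_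
  rw [Measure.smul_apply, Measure.restrict_apply hs]
  have h1 : μ (s ∩ cylinder [a]) = 0 := measure_mono_null Set.inter_subset_left h0
  simp [h1]

end MeasureLemmas

section Main
open MeasureTheory

/-- If `‖[D, π(M_f)]‖ ≤ 1` then `‖Kf − f‖_{L²} ≤ 1` and `‖Lf − f‖_{L²} ≤ 1`. -/
theorem stmt18
    (μ : Measure Ω) [IsProbabilityMeasure μ]
    (hμ : ∀ w : List Bool, μ (cylinder w) = (1 / 2) ^ w.length)
    (K L : E μ →L[ℝ] E μ)
    (hK : ∀ g : E μ, (K g : Ω → ℝ) =ᵐ[μ] fun x => g (shiftMap x))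
    (hL : ∀ g : E μ, (L g : Ω → ℝ) =ᵐ[μ]
      fun x => (g (consSeq false x) + g (consSeq true x)) / 2)
    (hadj : ContinuousLinearMap.adjoint K = L)
    (f : C(Ω, ℝ)) (Mf : E μ →L[ℝ] E μ)
    (hMf : ∀ g : E μ, (Mf g : Ω → ℝ) =ᵐ[μ] fun x => f x * g x)
    (fL : E μ) (hfL : (fL : Ω → ℝ) =ᵐ[μ] f)
    (h : ‖commD K L Mf‖ ≤ 1) :
    ‖K fL - fL‖ ≤ 1 ∧ ‖L fL - fL‖ ≤ 1 := by
  have hQσ := qmp_shiftMap μ hμ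
  have hQf := qmp_consSeq false μ hμ
  have hQt := qmp_consSeq true μ hμ
  set one : E μ := (memLp_const (1:ℝ) (μ := μ) (p := 2)).toLp (fun _ => (1:ℝ)) with hone_def
  have hone : (one : Ω → ℝ) =ᵐ[μ] fun _ => (1:ℝ) := MemLp.coeFn_toLp _
  have hone_norm : ‖one‖ = 1 := by
    rw [Lp.norm_def, eLpNorm_congr_ae hone,
      eLpNorm_const (1:ℝ) (by norm_num) (IsProbabilityMeasure.ne_zero (μ := μ))]
    simp
  have hK1 : K one = one := by
    refine Lp.ext ?_
    have h1 : (fun x => one (shiftMap x)) =ᵐ[μ] fun _ => (1:ℝ) := hQσ.ae_eq_comp hone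
    exact (hK one).trans (h1.trans hone.symm)
  have hL1 : L one = one := by
    refine Lp.ext ?_
    have h0 : (fun x => one (consSeq false x)) =ᵐ[μ] fun _ => (1:ℝ) := hQf.ae_eq_comp hone
    have h1 : (fun x => one (consSeq true x)) =ᵐ[μ] fun _ => (1:ℝ) := hQt.ae_eq_comp hone
    refine (hL one).trans (Filter.EventuallyEq.trans ?_ hone.symm)
    filter_upwards [h0, h1] with x hx0 hx1
    rw [hx0, hx1]; norm_num
  have hMf1 : Mf one = fL := by
    refine Lp.ext ?_
    refine (hMf one).trans (Filter.EventuallyEq.trans ?_ hfL.symm)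
    filter_upwards [hone] with x hx
    rw [hx, mul_one]
  set e := WithLp.prodContinuousLinearEquiv 2 ℝ (E μ) (E μ) with he
  have happly : ∀ φ ψ : E μ, commD K L Mf (e.symm (φ, ψ))
      = e.symm (K (Mf ψ) - Mf (K ψ), L (Mf φ) - Mf (L φ)) := by
    intro φ ψ
    simp only [he, commD, dirac, diagRep, blockDiag, blockAntidiag,
      ContinuousLinearMap.sub_apply, ContinuousLinearMap.comp_apply,
      ContinuousLinearEquiv.coe_coe, ContinuousLinearMap.prod_apply,
      ContinuousLinearMap.coe_fst', ContinuousLinearMap.coe_snd',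
      ContinuousLinearEquiv.apply_symm_apply, map_sub]
    rfl
  have hfst : ∀ u : E μ, ((e.symm (u, 0) : HS μ)).fst = u := fun u => rfl
  have hnorm1 : ∀ u : E μ, ‖(e.symm (u, 0) : HS μ)‖ = ‖u‖ := by
    intro u
    rw [WithLp.prod_norm_eq_of_L2]
    show Real.sqrt (‖u‖^2 + ‖(0 : E μ)‖^2) = ‖u‖
    rw [norm_zero]
    simp [Real.sqrt_sq (norm_nonneg u)]
  have hnorm2 : ∀ u : E μ, ‖(e.symm (0, u) : HS μ)‖ = ‖u‖ := by
    intro u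
    rw [WithLp.prod_norm_eq_of_L2]
    show Real.sqrt (‖(0 : E μ)‖^2 + ‖u‖^2) = ‖u‖
    rw [norm_zero]
    simp [Real.sqrt_sq (norm_nonneg u)]
  constructor
  · have hc := happly 0 one
    rw [hK1, hMf1] at hc
    simp only [map_zero, sub_self] at hc
    have hb := (commD K L Mf).le_opNorm (e.symm ((0 : E μ), one))
    rw [hc, hnorm1, hnorm2, hone_norm, mul_one] at hb
    exact hb.trans h
  · have hc := happly one 0
    rw [hL1, hMf1] at hc
    simp only [map_zero, sub_self] at hc
    have hb := (commD K L Mf).le_opNorm (e.symm (one, (0 : E μ)))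
    rw [hc, hnorm2, hnorm1, hone_norm, mul_one] at hb
    exact hb.trans h

end Main
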